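/- Let L be a linear subspace of D×D complex matrices. If L^j = 0 for some positive integer j, then L^D = 0. -/
import Mathlib

open Submodule Matrix

namespace Stmt8Aux

variable {D : ℕ}

/-- The action of a subspace of matrices on a subspace of vectors. -/
noncomputable def act (P : Submodule ℂ (Matrix (Fin D) (Fin D) ℂ)) (W : Submodule ℂ (Fin D → ℂ)) :
    Submodule ℂ (Fin D → ℂ) :=
  Submodule.span ℂ (Set.image2 (fun (M : Matrix (Fin D) (Fin D) ℂ) (v : Fin D → ℂ) =>
    Matrix.mulVec M v) (P : Set _) (W : Set _))

lemma mem_act {P : Submodule ℂ (Matrix (Fin D) (Fin D) ℂ)} {W : Submodule ℂ (Fin D → ℂ)}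
    {M : Matrix (Fin D) (Fin D) ℂ} (hM : M ∈ P) {v : Fin D → ℂ} (hv : v ∈ W) :
    M.mulVec v ∈ act P W :=
  subset_span ⟨M, hM, v, hv, rfl⟩

lemma act_le {P : Submodule ℂ (Matrix (Fin D) (Fin D) ℂ)} {W X : Submodule ℂ (Fin D → ℂ)}
    (h : ∀ M ∈ P, ∀ v ∈ W, M.mulVec v ∈ X) : act P W ≤ X := by
  refine span_le.2 ?_
  rintro _ ⟨M, hM, v, hv, rfl⟩
  exact h M hM v hv

lemma act_mono {P Q : Submodule ℂ (Matrix (Fin D) (Fin D) ℂ)} {W X : Submodule ℂ (Fin D → ℂ)}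
    (hPQ : P ≤ Q) (hWX : W ≤ X) : act P W ≤ act Q X :=
  act_le fun M hM v hv => mem_act (hPQ hM) (hWX hv)

lemma act_mul (P Q : Submodule ℂ (Matrix (Fin D) (Fin D) ℂ)) (W : Submodule ℂ (Fin D → ℂ)) :
    act (P * Q) W = act P (act Q W) := by
  apply le_antisymm
  · refine act_le fun M hM => ?_
    induction hM using Submodule.mul_induction_on' with
    | mem_mul_mem A hA B hB =>
      intro v hv
      rw [← Matrix.mulVec_mulVec]
      exact mem_act hA (mem_act hB hv)
    | add A hA B hB ihA ihB =>
      intro v hv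
      rw [Matrix.add_mulVec]
      exact add_mem (ihA v hv) (ihB v hv)
  · refine act_le fun M hM u hu => ?_
    simp only [act] at hu
    induction hu using Submodule.span_induction with
    | mem u hu =>
      obtain ⟨N, hN, w, hw, rfl⟩ := hu
      rw [Matrix.mulVec_mulVec]
      exact mem_act (Submodule.mul_mem_mul hM hN) hw
    | zero => rw [Matrix.mulVec_zero]; exact zero_mem _
    | add x y _ _ ihx ihy => rw [Matrix.mulVec_add]; exact add_mem ihx ihy
    | smul c x _ ihx => rw [Matrix.mulVec_smul]; exact smul_mem _ c ihx

lemma act_bot (W : Submodule ℂ (Fin D → ℂ)) : act (⊥ : Submodule ℂ _) W = ⊥ := by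
  refine le_bot_iff.1 (act_le fun M hM v hv => ?_)
  rw [Submodule.mem_bot] at hM
  subst hM
  simp [Matrix.zero_mulVec]

lemma eq_bot_of_act_top {P : Submodule ℂ (Matrix (Fin D) (Fin D) ℂ)}
    (h : act P ⊤ = ⊥) : P = ⊥ := by
  refine le_bot_iff.1 fun M hM => ?_
  rw [Submodule.mem_bot]
  ext i k
  have : M.mulVec (Pi.single k 1) ∈ act P ⊤ := mem_act hM (mem_top)
  rw [h, Submodule.mem_bot] at this
  have := congrFun this i
  simpa [Matrix.mulVec_single] using this

variable (L : Submodule ℂ (Matrix (Fin D) (Fin D) ℂ))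

/-- The chain `L^k • ⊤`. -/
noncomputable def W (k : ℕ) : Submodule ℂ (Fin D → ℂ) := act (L ^ k) ⊤

lemma W_succ (k : ℕ) : W L (k + 1) = act L (W L k) := by
  rw [W, W, pow_succ', act_mul]

lemma W_succ_le (k : ℕ) : W L (k + 1) ≤ W L k := by
  rw [W, W, pow_succ, act_mul]
  exact act_mono le_rfl le_top

lemma W_le_W {k m : ℕ} (h : k ≤ m) : W L m ≤ W L k := by
  induction m with
  | zero => simp_all
  | succ n ih =>
    rcases Nat.lt_or_ge k (n + 1) with hk | hk
    · exact (W_succ_le L n).trans (ih (Nat.lt_succ_iff.1 hk))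
    · have : k = n + 1 := le_antisymm h hk
      subst this; rfl

lemma W_stab {k : ℕ} (hk : W L (k + 1) = W L k) {m : ℕ} (hm : k ≤ m) :
    W L m = W L k := by
  induction m with
  | zero => simp_all
  | succ n ih =>
    rcases Nat.lt_or_ge k (n + 1) with h' | h'
    · have hn : k ≤ n := Nat.lt_succ_iff.1 h'
      rw [W_succ, ih hn, ← W_succ, hk]
    · have : k = n + 1 := le_antisymm hm h'
      subst this; rfl

end Stmt8Aux

theorem stmt8 (D : ℕ) (L : Submodule ℂ (Matrix (Fin D) (Fin D) ℂ))
    (j : ℕ) (hj : 1 ≤ j) (h : L ^ j = ⊥) :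
    L ^ D = ⊥ := by
  open Stmt8Aux in
  have hWj : W L j = ⊥ := by rw [W, h, act_bot]
  -- strict decrease while nonzero
  have key : ∀ k, W L k ≠ ⊥ → Module.finrank ℂ (W L k) + k ≤ D := by
    intro k
    induction k with
    | zero =>
      intro _
      simpa using (Submodule.finrank_le (W L 0)).trans_eq
        (by simp [Module.finrank_fintype_fun_eq_card])
    | succ n ih =>
      intro hne
      have hWn : W L n ≠ ⊥ := fun hb => hne (le_bot_iff.1 (hb ▸ W_succ_le L n))
      have hlt : W L (n + 1) < W L n := by
        refine lt_of_le_of_ne (W_succ_le L n) fun heq => ?_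
        have hm : W L (max j n) = W L n := W_stab L heq (le_max_right _ _)
        have : W L (max j n) ≤ W L j := W_le_W L (le_max_left _ _)
        rw [hm, hWj, le_bot_iff] at this
        exact hWn this
      have h1 := Submodule.finrank_lt_finrank_of_lt hlt
      have h2 := ih hWn
      omega
  have hWD : W L D = ⊥ := by
    by_contra hne
    have h1 := key D hne
    have h2 : Module.finrank ℂ (W L D) = 0 := by omega
    exact hne (Submodule.finrank_eq_zero.1 h2)
  exact eq_bot_of_act_top hWD
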